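/- Positivity of the energy level on the Nehari manifold: Let N ≥ 3, s ∈ (0,1), α ∈ (0, N), ζ ∈ [0, Λ), and let 0 < θ_1 < θ_2 < ⋯ < θ_k < 2s with 2θ_k − θ_1 ∈ (0, 2s) (k ≥ 2 finite). Assume S_{ζ,α} > 0 and H_{ζ,θ_i} > 0 for each i = 1, …, k. Then there exists δ > 0 such that every u in the Nehari set 𝒩² — i.e., every u ∈ D^{s,2}(ℝ^N) with u ≠ 0, D_α(u) < ∞, ∫ |u|^{2*_{s,θ_i}}/|x|^{θ_i} dx < ∞ for each i, and ‖u‖_ζ² = D_α(u) + Σ_{i=1}^k ∫ |u|^{2*_{s,θ_i}}/|x|^{θ_i} dx — satisfies I_2(u) ≥ δ, where I_2(u) = (1/2)‖u‖_ζ² − (1/(2·2*_α)) D_α(u) − Σ_{i=1}^k (1/2*_{s,θ_i}) ∫ |u|^{2*_{s,θ_i}}/|x|^{θ_i} dx. -/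

import Mathlib

open MeasureTheory ENNReal

noncomputable section

abbrev Euc (N : ℕ) := EuclideanSpace ℝ (Fin N)

/-- Normalization constant of the fractional Laplacian. -/
def cNs (N : ℕ) (s : ℝ) : ℝ :=
  4 ^ s * Real.Gamma ((N : ℝ) / 2 + s) / (Real.pi ^ ((N : ℝ) / 2) * |Real.Gamma (-s)|)

/-- Squared Gagliardo seminorm ‖u‖_D². -/
def DnormSq (N : ℕ) (s : ℝ) (u : Euc N → ℝ) : ℝ≥0∞ :=
  ENNReal.ofReal (cNs N s / 2) *
    ∫⁻ x : Euc N, ∫⁻ y : Euc N,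
      ENNReal.ofReal (|u x - u y| ^ 2 / ‖x - y‖ ^ ((N : ℝ) + 2 * s))

/-- The double Riesz-energy D_α(u). -/
def RieszEnergy (N : ℕ) (s α : ℝ) (u : Euc N → ℝ) : ℝ≥0∞ :=
  ∫⁻ x : Euc N, ∫⁻ y : Euc N,
    ENNReal.ofReal (|u x| ^ ((2 * (N : ℝ) - α) / ((N : ℝ) - 2 * s)) *
      |u y| ^ ((2 * (N : ℝ) - α) / ((N : ℝ) - 2 * s)) / ‖x - y‖ ^ α)

/-- ∫ |u|^{2*_s}. -/
def sobInt (N : ℕ) (s : ℝ) (u : Euc N → ℝ) : ℝ≥0∞ :=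
  ∫⁻ x : Euc N, ENNReal.ofReal (|u x| ^ (2 * (N : ℝ) / ((N : ℝ) - 2 * s)))

/-- Hardy integral ∫ |u|²/|x|^{2s}. -/
def hardyInt (N : ℕ) (s : ℝ) (u : Euc N → ℝ) : ℝ≥0∞ :=
  ∫⁻ x : Euc N, ENNReal.ofReal (|u x| ^ 2 / ‖x‖ ^ (2 * s))

/-- Hardy–Sobolev integral ∫ |u|^{2*_{s,θ}}/|x|^θ. -/
def hsInt (N : ℕ) (s θ : ℝ) (u : Euc N → ℝ) : ℝ≥0∞ :=
  ∫⁻ x : Euc N, ENNReal.ofReal (|u x| ^ (2 * ((N : ℝ) - θ) / ((N : ℝ) - 2 * s)) / ‖x‖ ^ θ)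

/-- Morrey norm ‖u‖_{𝓛^{p,ϖ}}. -/
def morrey (N : ℕ) (p ϖ : ℝ) (u : Euc N → ℝ) : ℝ≥0∞ :=
  (⨆ (R : ℝ) (_ : 0 < R) (x : Euc N),
    ENNReal.ofReal (R ^ (ϖ - (N : ℝ))) *
      ∫⁻ y in Metric.ball x R, ENNReal.ofReal (|u y| ^ p)) ^ (1 / p)

/-- Membership in D^{s,2}(ℝ^N). -/
def memD (N : ℕ) (s : ℝ) (u : Euc N → ℝ) : Prop :=
  MemLp u (ENNReal.ofReal (2 * (N : ℝ) / ((N : ℝ) - 2 * s))) volume ∧ DnormSq N s u < ⊤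

/-- The best fractional Hardy constant Λ. -/
def LambdaC (N : ℕ) (s : ℝ) : ℝ :=
  4 ^ s * Real.Gamma (((N : ℝ) + 2 * s) / 4) ^ 2 / Real.Gamma (((N : ℝ) - 2 * s) / 4) ^ 2

/-- ‖u‖_ζ² = ‖u‖_D² − ζ ∫ |u|²/|x|^{2s}. -/
def zetaNormSq (N : ℕ) (s ζ : ℝ) (u : Euc N → ℝ) : ℝ :=
  (DnormSq N s u).toReal - ζ * (hardyInt N s u).toReal

/-- Best constant S_{ζ,α}. -/
def Sconst (N : ℕ) (s α ζ : ℝ) : ℝ :=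
  sInf { r : ℝ | ∃ u : Euc N → ℝ, memD N s u ∧ 0 < RieszEnergy N s α u ∧
    RieszEnergy N s α u < ⊤ ∧
    r = zetaNormSq N s ζ u /
      (RieszEnergy N s α u).toReal ^ (((N : ℝ) - 2 * s) / (2 * (N : ℝ) - α)) }

/-- Best constant H_{ζ,θ}. -/
def Hconst (N : ℕ) (s θ ζ : ℝ) : ℝ :=
  sInf { r : ℝ | ∃ u : Euc N → ℝ, memD N s u ∧ 0 < hsInt N s θ u ∧
    hsInt N s θ u < ⊤ ∧
    r = zetaNormSq N s ζ u /
      (hsInt N s θ u).toReal ^ (((N : ℝ) - 2 * s) / ((N : ℝ) - θ)) }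

end

/-- The energy functional I₂. -/
noncomputable def I2 (N : ℕ) (s α ζ : ℝ) (k : ℕ) (θ : Fin k → ℝ) (u : Euc N → ℝ) : ℝ :=
  1 / 2 * zetaNormSq N s ζ u
    - ((N : ℝ) - 2 * s) / (2 * (2 * (N : ℝ) - α)) * (RieszEnergy N s α u).toReal
    - ∑ i, ((N : ℝ) - 2 * s) / (2 * ((N : ℝ) - θ i)) * (hsInt N s (θ i) u).toReal

section AuxLemmas

lemma aux_sInf_le {S : Set ℝ} (h : 0 < sInf S) {r : ℝ} (hr : r ∈ S) : sInf S ≤ r := by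
  by_cases hb : BddBelow S
  · exact csInf_le hb hr
  · rw [Real.sInf_of_not_bddBelow hb] at h
    exact absurd h (lt_irrefl 0)

lemma aux_bound {C t X e : ℝ} (hC : 0 < C) (hX : 0 < X) (he : 0 < e)
    (h : C ≤ t / X ^ e⁻¹) : X ≤ (t / C) ^ e := by
  have hXe : 0 < X ^ e⁻¹ := Real.rpow_pos_of_pos hX _
  have h2 : C * X ^ e⁻¹ ≤ t := (le_div_iff₀ hXe).1 h
  have h1 : X ^ e⁻¹ ≤ t / C := (le_div_iff₀ hC).2 (by nlinarith)
  calc X = (X ^ e⁻¹) ^ e := by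
        rw [← Real.rpow_mul hX.le, inv_mul_cancel₀ he.ne', Real.rpow_one]
    _ ≤ (t / C) ^ e := Real.rpow_le_rpow hXe.le h1 he.le

lemma aux_term_lt {C t K e : ℝ} (hC : 0 < C) (ht : 0 < t) (hK : 0 < K) (he : 1 < e)
    (hlt : t < (C ^ e / K) ^ (1 / (e - 1))) : (t / C) ^ e < t / K := by
  have hCe : 0 < C ^ e := Real.rpow_pos_of_pos hC _
  have hX : (0:ℝ) ≤ C ^ e / K := (div_pos hCe hK).le
  have h1 : t ^ (e - 1) < ((C ^ e / K) ^ (1 / (e - 1))) ^ (e - 1) :=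
    Real.rpow_lt_rpow ht.le hlt (by linarith)
  rw [← Real.rpow_mul hX, one_div, inv_mul_cancel₀ (by linarith : (0:ℝ) < e - 1).ne',
    Real.rpow_one] at h1
  have h2 : t ^ (e - 1) * K < C ^ e := (lt_div_iff₀ hK).1 h1
  rw [Real.div_rpow ht.le hC.le, div_lt_div_iff₀ hCe hK]
  have h3 : t ^ e = t ^ (e - 1) * t := by
    rw [← Real.rpow_add_one ht.ne' (e - 1)]; congr 1; ring
  rw [h3]
  nlinarith

lemma aux_pos (N : ℕ) (hN : 1 ≤ N) (p θ0 : ℝ) (hp : 0 < p)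
    (u : Euc N → ℝ) (hu : AEMeasurable u (volume : Measure (Euc N)))
    (h0 : ¬ u =ᵐ[volume] (fun _ => (0 : ℝ))) :
    0 < ∫⁻ x : Euc N, ENNReal.ofReal (|u x| ^ p / ‖x‖ ^ θ0) := by
  rw [pos_iff_ne_zero]
  intro heq
  apply h0
  have hm : AEMeasurable (fun x : Euc N => ENNReal.ofReal (|u x| ^ p / ‖x‖ ^ θ0)) volume := by
    apply ENNReal.measurable_ofReal.comp_aemeasurable
    exact ((continuous_abs.measurable.comp_aemeasurable hu).pow aemeasurable_const).div
      ((measurable_norm.pow measurable_const).aemeasurable)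
  have hz := (lintegral_eq_zero_iff' hm).1 heq
  haveI : Nonempty (Fin N) := ⟨⟨0, hN⟩⟩
  haveI : NullSingletonClass (volume : Measure (Euc N)) := inferInstance
  have hne : ∀ᵐ x : Euc N, x ≠ 0 := by
    rw [ae_iff]
    simpa using measure_singleton (0 : Euc N)
  filter_upwards [hz, hne] with x hx hx0
  simp only [Pi.zero_apply, ENNReal.ofReal_eq_zero] at hx
  have hden : 0 < ‖x‖ ^ θ0 := Real.rpow_pos_of_pos (norm_pos_iff.2 hx0) θ0
  have hnum : |u x| ^ p = 0 := by
    rcases le_or_gt (|u x| ^ p) 0 with h | h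
    · exact le_antisymm h (Real.rpow_nonneg (abs_nonneg _) _)
    · exact absurd hx (not_le.2 (div_pos h hden))
  have := (Real.rpow_eq_zero (abs_nonneg _) hp.ne').1 hnum
  simpa using this

end AuxLemmas

set_option maxHeartbeats 2000000 in
/-- Positivity of the energy level on the Nehari manifold 𝒩². -/
theorem statement12 (N : ℕ) (hN : 3 ≤ N) (s α ζ : ℝ) (hs : 0 < s ∧ s < 1)
    (hα : 0 < α ∧ α < N) (hζ : 0 ≤ ζ ∧ ζ < LambdaC N s)
    (k : ℕ) (hk : 2 ≤ k) (θ : Fin k → ℝ) (hmono : StrictMono θ)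
    (hθ0 : ∀ i, 0 < θ i) (hθ2s : ∀ i, θ i < 2 * s)
    (hlast : 0 < 2 * θ ⟨k - 1, by omega⟩ - θ ⟨0, by omega⟩ ∧
      2 * θ ⟨k - 1, by omega⟩ - θ ⟨0, by omega⟩ < 2 * s)
    (hS : 0 < Sconst N s α ζ) (hH : ∀ i, 0 < Hconst N s (θ i) ζ) :
    ∃ δ : ℝ, 0 < δ ∧ ∀ u : Euc N → ℝ, memD N s u →
      ¬ u =ᵐ[volume] (fun _ => (0 : ℝ)) →
      RieszEnergy N s α u < ⊤ → (∀ i, hsInt N s (θ i) u < ⊤) →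
      zetaNormSq N s ζ u =
        (RieszEnergy N s α u).toReal + ∑ i, (hsInt N s (θ i) u).toReal →
      δ ≤ I2 N s α ζ k θ u := by
  obtain ⟨hs0, hs1⟩ := hs
  obtain ⟨hα0, hαN⟩ := hα
  have hNr : (3:ℝ) ≤ (N:ℝ) := by exact_mod_cast hN
  have hσ : 0 < (N:ℝ) - 2 * s := by nlinarith
  have hkpos : 0 < k := by omega
  haveI : Nonempty (Fin k) := ⟨⟨0, hkpos⟩⟩
  set a : ℝ := (2 * (N:ℝ) - α) / ((N:ℝ) - 2 * s) with ha_def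
  set b : Fin k → ℝ := fun i => ((N:ℝ) - θ i) / ((N:ℝ) - 2 * s) with hb_def
  have ha1 : 1 < a := by
    rw [ha_def]
    rw [one_lt_div hσ]
    nlinarith
  have hb1 : ∀ i, 1 < b i := by
    intro i
    have h1 := hθ2s i
    rw [hb_def]
    rw [one_lt_div hσ]
    linarith
  set K : ℝ := (k:ℝ) + 1 with hK_def
  have hK : 0 < K := by positivity
  set mα : ℝ := (Sconst N s α ζ ^ a / K) ^ (1 / (a - 1)) with hmα_def
  set m : Fin k → ℝ := fun i => (Hconst N s (θ i) ζ ^ (b i) / K) ^ (1 / (b i - 1)) with hm_def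
  have hmαpos : 0 < mα := Real.rpow_pos_of_pos (div_pos (Real.rpow_pos_of_pos hS _) hK) _
  have hmpos : ∀ i, 0 < m i := fun i =>
    Real.rpow_pos_of_pos (div_pos (Real.rpow_pos_of_pos (hH i) _) hK) _
  set t0 : ℝ := min mα (Finset.univ.inf' Finset.univ_nonempty m) with ht0_def
  have ht0 : 0 < t0 := lt_min hmαpos (by
    rw [Finset.lt_inf'_iff]
    exact fun i _ => hmpos i)
  set c : ℝ := min (1/2 - 1/(2*a))
    (Finset.univ.inf' Finset.univ_nonempty (fun i => 1/2 - 1/(2 * b i))) with hc_def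
  have hca : (0:ℝ) < 1/2 - 1/(2*a) := by
    have h : 1/(2*a) < 1/2 := by
      rw [div_lt_div_iff₀ (by linarith) (by norm_num)]
      linarith
    linarith
  have hcb : ∀ i, (0:ℝ) < 1/2 - 1/(2 * b i) := by
    intro i
    have h1 := hb1 i
    have h : 1/(2 * b i) < 1/2 := by
      rw [div_lt_div_iff₀ (by linarith) (by norm_num)]
      linarith
    linarith
  have hc : 0 < c := lt_min hca (by
    rw [Finset.lt_inf'_iff]
    exact fun i _ => hcb i)
  refine ⟨c * t0, mul_pos hc ht0, ?_⟩
  intro u hu hne hRfin hHfin hNeh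
  have huae : AEMeasurable u (volume : Measure (Euc N)) := hu.1.1.aemeasurable
  have hHpos : ∀ i, 0 < hsInt N s (θ i) u := by
    intro i
    have hp : 0 < 2 * ((N:ℝ) - θ i) / ((N:ℝ) - 2 * s) := by
      have := hθ2s i
      apply div_pos (by nlinarith) hσ
    exact aux_pos N (by omega) _ _ hp u huae hne
  set t := zetaNormSq N s ζ u with ht_def
  set D := (RieszEnergy N s α u).toReal with hD_def
  have hDnn : (0:ℝ) ≤ D := ENNReal.toReal_nonneg
  have hX : ∀ i, 0 < (hsInt N s (θ i) u).toReal := fun i =>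
    ENNReal.toReal_pos (hHpos i).ne' (hHfin i).ne
  have hsumpos : 0 < ∑ i, (hsInt N s (θ i) u).toReal :=
    Finset.sum_pos (fun i _ => hX i) Finset.univ_nonempty
  have htpos : 0 < t := by rw [hNeh]; linarith
  have hbD : D ≤ (t / Sconst N s α ζ) ^ a := by
    by_cases hD0 : RieszEnergy N s α u = 0
    · rw [hD_def, hD0]
      simpa using Real.rpow_nonneg (div_nonneg htpos.le hS.le) a
    · have hDpos : 0 < D := ENNReal.toReal_pos hD0 hRfin.ne
      have hle : Sconst N s α ζ ≤ t / D ^ (((N:ℝ) - 2 * s) / (2 * (N:ℝ) - α)) :=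
        aux_sInf_le hS ⟨u, hu, pos_iff_ne_zero.2 hD0, hRfin, rfl⟩
      have hexp : ((N:ℝ) - 2 * s) / (2 * (N:ℝ) - α) = a⁻¹ := by
        rw [ha_def, inv_div]
      rw [hexp] at hle
      exact aux_bound hS hDpos (by linarith) hle
  have hbH : ∀ i, (hsInt N s (θ i) u).toReal ≤ (t / Hconst N s (θ i) ζ) ^ (b i) := by
    intro i
    have hle : Hconst N s (θ i) ζ ≤
        t / (hsInt N s (θ i) u).toReal ^ (((N:ℝ) - 2 * s) / ((N:ℝ) - θ i)) :=
      aux_sInf_le (hH i) ⟨u, hu, hHpos i, hHfin i, rfl⟩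
    have hexp : ((N:ℝ) - 2 * s) / ((N:ℝ) - θ i) = (b i)⁻¹ := by
      rw [hb_def, inv_div]
    rw [hexp] at hle
    exact aux_bound (hH i) (hX i) (by linarith [hb1 i]) hle
  have htup : t ≤ (t / Sconst N s α ζ) ^ a + ∑ i, (t / Hconst N s (θ i) ζ) ^ (b i) := by
    calc t = D + ∑ i, (hsInt N s (θ i) u).toReal := hNeh
      _ ≤ _ := add_le_add hbD (Finset.sum_le_sum fun i _ => hbH i)
  have ht0t : t0 ≤ t := by
    by_contra hcon
    push_neg at hcon
    have h1 : (t / Sconst N s α ζ) ^ a < t / K :=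
      aux_term_lt hS htpos hK ha1 (lt_of_lt_of_le hcon (min_le_left _ _))
    have h2 : ∀ i, (t / Hconst N s (θ i) ζ) ^ (b i) < t / K := fun i =>
      aux_term_lt (hH i) htpos hK (hb1 i)
        (lt_of_lt_of_le hcon ((min_le_right _ _).trans (Finset.inf'_le _ (Finset.mem_univ i))))
    have hsum : ∑ i, (t / Hconst N s (θ i) ζ) ^ (b i) < ∑ _i : Fin k, t / K :=
      Finset.sum_lt_sum_of_nonempty Finset.univ_nonempty (fun i _ => h2 i)
    have hconst : ∑ _i : Fin k, t / K = (k:ℝ) * (t / K) := by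
      simp [Finset.sum_const, Finset.card_univ, nsmul_eq_mul]
    have hKsum : (t / K) + (k:ℝ) * (t / K) = t := by
      rw [hK_def]
      field_simp
      ring
    rw [hconst] at hsum
    linarith
  -- coefficient identities
  have hσ' : (N:ℝ) - 2 * s ≠ 0 := hσ.ne'
  have h2Nα : 2 * (N:ℝ) - α ≠ 0 := by nlinarith
  have hcoefα : ((N:ℝ) - 2 * s) / (2 * (2 * (N:ℝ) - α)) = 1/(2*a) := by
    rw [ha_def, show 2 * ((2 * (N:ℝ) - α) / ((N:ℝ) - 2 * s))
      = (2 * (2 * (N:ℝ) - α)) / ((N:ℝ) - 2 * s) from by ring, one_div_div]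
  have hcoefθ : ∀ i, ((N:ℝ) - 2 * s) / (2 * ((N:ℝ) - θ i)) = 1/(2 * b i) := by
    intro i
    have hNθ : (N:ℝ) - θ i ≠ 0 := by
      have := hθ2s i; nlinarith
    simp only [hb_def]
    rw [show 2 * (((N:ℝ) - θ i) / ((N:ℝ) - 2 * s))
      = (2 * ((N:ℝ) - θ i)) / ((N:ℝ) - 2 * s) from by ring, one_div_div]
  have hI2 : I2 N s α ζ k θ u
      = (1/2 - ((N:ℝ) - 2 * s) / (2 * (2 * (N:ℝ) - α))) * D
        + ∑ i, (1/2 - ((N:ℝ) - 2 * s) / (2 * ((N:ℝ) - θ i))) * (hsInt N s (θ i) u).toReal := by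
    unfold I2
    rw [← ht_def, ← hD_def, hNeh]
    have e1 : ∑ i, (1/2 - ((N:ℝ) - 2 * s) / (2 * ((N:ℝ) - θ i))) * (hsInt N s (θ i) u).toReal
        = (1/2) * (∑ i, (hsInt N s (θ i) u).toReal)
          - ∑ i, ((N:ℝ) - 2 * s) / (2 * ((N:ℝ) - θ i)) * (hsInt N s (θ i) u).toReal := by
      rw [Finset.mul_sum, ← Finset.sum_sub_distrib]
      exact Finset.sum_congr rfl (fun i _ => by ring)
    rw [e1]
    ring
  have hcα' : c ≤ 1/2 - ((N:ℝ) - 2 * s) / (2 * (2 * (N:ℝ) - α)) := by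
    rw [hcoefα]
    exact min_le_left _ _
  have hcθ' : ∀ i, c ≤ 1/2 - ((N:ℝ) - 2 * s) / (2 * ((N:ℝ) - θ i)) := by
    intro i
    rw [hcoefθ i]
    exact (min_le_right _ _).trans (Finset.inf'_le _ (Finset.mem_univ i))
  have h2 : c * t ≤ I2 N s α ζ k θ u := by
    rw [hI2, hNeh, mul_add, Finset.mul_sum]
    apply add_le_add
    · exact mul_le_mul_of_nonneg_right hcα' hDnn
    · exact Finset.sum_le_sum fun i _ => mul_le_mul_of_nonneg_right (hcθ' i) (hX i).le
  calc c * t0 ≤ c * t := mul_le_mul_of_nonneg_left ht0t hc.le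
    _ ≤ _ := h2
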